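/- Let g > 0, h_l > 0, u_l > 0, b₀ > 0 be real numbers, and define H̃(h) := −c₁(h)·(η(h, u₀(h)) − η(h_l, u_l)) for h ≥ h_l. Then H̃ is nonnegative on [h̃, h̲] and strictly increasing on (h̃, h̲], where z := u_l²/(g·h_l), h̃ := h_l if z ≤ 1 and h̃ := (h_l/2)·(√(1 + 8z) − 1) if z > 1, and h̲ is the largest real root of f. -/

import Mathlib

/-- Velocity along the 1-shock curve from `(h_l, u_l)` at depth `h`. -/
noncomputable def uZero (g hl ul h : ℝ) : ℝ :=
  ul - Real.sqrt ((g / 2) * (1 / h + 1 / hl)) * (h - hl)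

/-- Speed of the 1-shock from `(h_l, u_l)` to depth `h`. -/
noncomputable def cOne (g hl ul h : ℝ) : ℝ :=
  ul - Real.sqrt ((g / 2) * (1 / h + 1 / hl)) * h

/-- Energy density `η(h,u) = hu²/2 + gh²/2 + b₀h`. -/
noncomputable def eta (g b₀ h u : ℝ) : ℝ :=
  h * u ^ 2 / 2 + g * h ^ 2 / 2 + b₀ * h

/-- The cubic `f(h) = h³ − h_l h² − (h_l² + (2/g)u_l²h_l)h + h_l³`. -/
noncomputable def fCubic (g hl ul h : ℝ) : ℝ :=
  h ^ 3 - hl * h ^ 2 - (hl ^ 2 + (2 / g) * ul ^ 2 * hl) * h + hl ^ 3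

/-- `h̃ = h_l` if `z ≤ 1` and `h̃ = (h_l/2)(√(1+8z) − 1)` if `z > 1`,
where `z = u_l²/(gh_l)`. -/
noncomputable def hTilde (g hl ul : ℝ) : ℝ :=
  if ul ^ 2 / (g * hl) ≤ 1 then hl
  else (hl / 2) * (Real.sqrt (1 + 8 * (ul ^ 2 / (g * hl))) - 1)

section Aux
variable {g hl ul b₀ : ℝ}

/-- S(h) = √((g/2)(1/h+1/hl)) * h -/
noncomputable def Sfun (g hl h : ℝ) : ℝ := Real.sqrt ((g / 2) * (1 / h + 1 / hl)) * h

lemma Sfun_sq (hg : 0 < g) (hhl : 0 < hl) {h : ℝ} (hh : 0 < h) :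
    (Sfun g hl h) ^ 2 = g * h * (h + hl) / (2 * hl) := by
  have h0 : 0 ≤ (g / 2) * (1 / h + 1 / hl) := by positivity
  unfold Sfun
  rw [mul_pow, Real.sq_sqrt h0]
  field_simp
  ring

lemma Sfun_nonneg (hg : 0 < g) (hhl : 0 < hl) {h : ℝ} (hh : 0 < h) : 0 ≤ Sfun g hl h := by
  have : 0 ≤ Real.sqrt ((g / 2) * (1 / h + 1 / hl)) := Real.sqrt_nonneg _
  unfold Sfun; positivity

lemma Sfun_lt (hg : 0 < g) (hhl : 0 < hl) {a b : ℝ} (ha : 0 < a) (hab : a < b) :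
    Sfun g hl a < Sfun g hl b := by
  have hb : 0 < b := ha.trans hab
  have h1 : (Sfun g hl a) ^ 2 < (Sfun g hl b) ^ 2 := by
    rw [Sfun_sq hg hhl ha, Sfun_sq hg hhl hb]
    apply (div_lt_div_iff_of_pos_right (by positivity)).mpr
    nlinarith [mul_pos hg ha, mul_pos hg hb, mul_pos hg hhl]
  exact lt_of_pow_lt_pow_left₀ 2 (Sfun_nonneg hg hhl hb) h1

end Aux

section Aux2
variable {g hl ul b₀ : ℝ}

lemma Sfun_le (hg : 0 < g) (hhl : 0 < hl) {a b : ℝ} (ha : 0 < a) (hab : a ≤ b) :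
    Sfun g hl a ≤ Sfun g hl b := by
  rcases eq_or_lt_of_le hab with rfl | h
  · exact le_rfl
  · exact (Sfun_lt hg hhl ha h).le

lemma neg_cOne (g hl ul h : ℝ) : -(cOne g hl ul h) = Sfun g hl h - ul := by
  unfold cOne Sfun; ring

/-- The key algebraic identity. -/
lemma eta_diff (hg : 0 < g) (hhl : 0 < hl) {h : ℝ} (hh : 0 < h) (ul b₀ : ℝ) :
    eta g b₀ h (uZero g hl ul h) - eta g b₀ hl ul
      = (h - hl) * ((cOne g hl ul h) ^ 2 + g * (h + hl) / 2 + 2 * b₀) / 2 := by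
  set t := Real.sqrt ((g / 2) * (1 / h + 1 / hl)) with ht
  have h0 : 0 ≤ (g / 2) * (1 / h + 1 / hl) := by positivity
  have ht2 : t ^ 2 = (g / 2) * (1 / h + 1 / hl) := Real.sq_sqrt h0
  have ht2' : t ^ 2 * (2 * h * hl) = g * (h + hl) := by
    rw [ht2]; field_simp; ring
  simp only [eta, uZero, cOne, ← ht]
  linear_combination (-(h - hl) / 4) * ht2'

lemma hTilde_ge (hg : 0 < g) (hhl : 0 < hl) (hul : 0 < ul) : hl ≤ hTilde g hl ul := by
  unfold hTilde
  split_ifs with hz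
  · exact le_rfl
  · push_neg at hz
    set z := ul ^ 2 / (g * hl) with hzdef
    have hz0 : (0:ℝ) ≤ 1 + 8 * z := by positivity
    have hr2 : (Real.sqrt (1 + 8 * z)) ^ 2 = 1 + 8 * z := Real.sq_sqrt hz0
    have hr : (3:ℝ) < Real.sqrt (1 + 8 * z) := by
      apply lt_of_pow_lt_pow_left₀ 2 (Real.sqrt_nonneg _)
      rw [hr2]; nlinarith
    nlinarith

lemma ul_le_S_hTilde (hg : 0 < g) (hhl : 0 < hl) (hul : 0 < ul) :
    ul ≤ Sfun g hl (hTilde g hl ul) := by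
  have hpos : 0 < hTilde g hl ul := lt_of_lt_of_le hhl (hTilde_ge hg hhl hul)
  apply le_of_pow_le_pow_left₀ (n := 2) two_ne_zero (Sfun_nonneg hg hhl hpos)
  rw [Sfun_sq hg hhl hpos]
  unfold hTilde
  split_ifs with hz
  · have : ul ^ 2 ≤ g * hl := by
      rw [div_le_one (by positivity)] at hz; linarith
    calc ul ^ 2 ≤ g * hl := this
      _ = g * hl * (hl + hl) / (2 * hl) := by field_simp; ring
  · set z := ul ^ 2 / (g * hl) with hzdef
    have hz0 : (0:ℝ) ≤ 1 + 8 * z := by positivity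
    have hr2 : (Real.sqrt (1 + 8 * z)) ^ 2 = 1 + 8 * z := Real.sq_sqrt hz0
    have hzz : z * (g * hl) = ul ^ 2 := by rw [hzdef]; exact div_mul_cancel₀ _ (by positivity)
    have : g * (hl / 2 * (Real.sqrt (1 + 8 * z) - 1)) *
        (hl / 2 * (Real.sqrt (1 + 8 * z) - 1) + hl) / (2 * hl) = ul ^ 2 := by
      field_simp
      linear_combination (g * hl) * hr2 + 8 * hzz
    linarith [this.ge]

end Aux2

theorem stmt_18' (g hl ul b₀ hunder : ℝ) (hg : 0 < g) (hhl : 0 < hl) (hul : 0 < ul)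
    (hb₀ : 0 < b₀) :
    (∀ h ∈ Set.Icc (hTilde g hl ul) hunder,
      0 ≤ -(cOne g hl ul h) * (eta g b₀ h (uZero g hl ul h) - eta g b₀ hl ul)) ∧
    StrictMonoOn
      (fun h : ℝ => -(cOne g hl ul h) * (eta g b₀ h (uZero g hl ul h) - eta g b₀ hl ul))
      (Set.Ioc (hTilde g hl ul) hunder) := by
  have hTge : hl ≤ hTilde g hl ul := hTilde_ge hg hhl hul
  have hTpos : 0 < hTilde g hl ul := lt_of_lt_of_le hhl hTge
  have hulS : ul ≤ Sfun g hl (hTilde g hl ul) := ul_le_S_hTilde hg hhl hul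
  constructor
  · rintro h ⟨h1, h2⟩
    have hpos : 0 < h := lt_of_lt_of_le hTpos h1
    rw [eta_diff hg hhl hpos ul b₀]
    have hS : ul ≤ Sfun g hl h := hulS.trans (Sfun_le hg hhl hTpos h1)
    have hc : 0 ≤ -(cOne g hl ul h) := by rw [neg_cOne]; linarith
    have hd : 0 ≤ h - hl := by linarith
    have h3 : 0 ≤ (cOne g hl ul h) ^ 2 + g * (h + hl) / 2 + 2 * b₀ := by
      nlinarith [sq_nonneg (cOne g hl ul h)]
    exact mul_nonneg hc (div_nonneg (mul_nonneg hd h3) (by norm_num))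
  · rintro a ⟨ha1, ha2⟩ b ⟨hb1, hb2⟩ hab
    simp only
    have hapos : 0 < a := hTpos.trans ha1
    have hbpos : 0 < b := hTpos.trans hb1
    rw [eta_diff hg hhl hapos ul b₀, eta_diff hg hhl hbpos ul b₀]
    have hPa : 0 < -(cOne g hl ul a) := by
      rw [neg_cOne]; have := Sfun_lt hg hhl hTpos ha1; linarith
    have hPab : -(cOne g hl ul a) < -(cOne g hl ul b) := by
      rw [neg_cOne, neg_cOne]; have := Sfun_lt hg hhl hapos hab; linarith
    have hPb : 0 < -(cOne g hl ul b) := hPa.trans hPab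
    have hda : 0 < a - hl := by linarith
    have hBa : 0 < (cOne g hl ul a) ^ 2 + g * (a + hl) / 2 + 2 * b₀ := by
      nlinarith [sq_nonneg (cOne g hl ul a)]
    have hBab : (cOne g hl ul a) ^ 2 + g * (a + hl) / 2 + 2 * b₀
        < (cOne g hl ul b) ^ 2 + g * (b + hl) / 2 + 2 * b₀ := by
      nlinarith [hPa, hPab, hPb]
    have t1 : (a - hl) * ((cOne g hl ul a) ^ 2 + g * (a + hl) / 2 + 2 * b₀)
        < (b - hl) * ((cOne g hl ul b) ^ 2 + g * (b + hl) / 2 + 2 * b₀) :=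
      mul_lt_mul'' (by linarith) hBab hda.le hBa.le
    calc -(cOne g hl ul a) * ((a - hl) * ((cOne g hl ul a) ^ 2 + g * (a + hl) / 2 + 2 * b₀) / 2)
        < -(cOne g hl ul b) * ((a - hl) * ((cOne g hl ul a) ^ 2 + g * (a + hl) / 2 + 2 * b₀) / 2) :=
          mul_lt_mul_of_pos_right hPab (div_pos (mul_pos hda hBa) two_pos)
      _ ≤ -(cOne g hl ul b) * ((b - hl) * ((cOne g hl ul b) ^ 2 + g * (b + hl) / 2 + 2 * b₀) / 2) :=
          mul_le_mul_of_nonneg_left (by linarith) hPb.le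


/-- The local energy production `H̃(h) = −c₁(h)(η(h,u₀(h)) − η(h_l,u_l))` of the
left-going 1-shock is nonnegative on `[h̃, h̲]` and strictly increasing on
`(h̃, h̲]`, `h̲` being the largest real root of `f`. -/
theorem stmt_18 (g hl ul b₀ hunder : ℝ) (hg : 0 < g) (hhl : 0 < hl) (hul : 0 < ul)
    (hb₀ : 0 < b₀)
    (hroot : fCubic g hl ul hunder = 0)
    (hmax : ∀ x : ℝ, fCubic g hl ul x = 0 → x ≤ hunder) :
    (∀ h ∈ Set.Icc (hTilde g hl ul) hunder,
      0 ≤ -(cOne g hl ul h) * (eta g b₀ h (uZero g hl ul h) - eta g b₀ hl ul)) ∧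
    StrictMonoOn
      (fun h : ℝ => -(cOne g hl ul h) * (eta g b₀ h (uZero g hl ul h) - eta g b₀ hl ul))
      (Set.Ioc (hTilde g hl ul) hunder) := by
  exact stmt_18' g hl ul b₀ hunder hg hhl hul hb₀
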